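/- Let n ≥ 1, A ∈ ℂ^{n×n}, and r ≥ 0 a real number. Suppose there exists a unit vector x₀ ∈ ℂⁿ with ‖A x₀‖ > r (strict feasibility), and suppose every z ∈ W_{≥r}(A) satisfies Re z > 0. Let A_h := (A + A*)/2 and A_s := (A − A*)/(2i). Then the set S := { h ∈ ℝ : there exists τ ≥ 0 such that A_s − h·A_h + τ·(A*A − r²·I) ⪯ 0 } is nonempty, and inf S = sup{ Im z / Re z : z ∈ W_{≥r}(A) }; moreover this infimum is attained (the supremum itself belongs to S). Equivalently, tan ψ̄_r(A) is the optimal value of the semidefinite program minimizing h subject to A_s − h·A_h + τ·(A*A − r²·I) ⪯ 0, τ ≥ 0. -/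

import Mathlib

open scoped ComplexOrder Matrix

noncomputable section

variable {n : ℕ}

/-- quadratic form of a complex matrix -/
noncomputable def qf (C : Matrix (Fin n) (Fin n) ℂ) (x : Fin n → ℂ) : ℂ := star x ⬝ᵥ C *ᵥ x

lemma qf_smul (C : Matrix (Fin n) (Fin n) ℂ) (c : ℂ) (x : Fin n → ℂ) :
    qf C (c • x) = star c * c * qf C x := by
  simp [qf, Matrix.mulVec_smul, dotProduct_smul, smul_dotProduct,
    smul_eq_mul]
  ring

lemma qcross_conj (C : Matrix (Fin n) (Fin n) ℂ) (x y : Fin n → ℂ) :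
    star (star x ⬝ᵥ C *ᵥ y) = star y ⬝ᵥ Cᴴ *ᵥ x := by
  rw [Matrix.star_dotProduct, star_star, Matrix.star_mulVec, Matrix.dotProduct_mulVec]

lemma qf_expand (C : Matrix (Fin n) (Fin n) ℂ) (α β : ℂ) (x y : Fin n → ℂ) :
    qf C (α • x + β • y) = star α * α * qf C x + star β * β * qf C y
      + star α * β * (star x ⬝ᵥ C *ᵥ y) + star β * α * (star y ⬝ᵥ C *ᵥ x) := by
  simp [qf, Matrix.mulVec_add, Matrix.mulVec_smul, dotProduct_add,
    add_dotProduct, dotProduct_smul, smul_dotProduct, smul_eq_mul,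
    star_add]
  ring

/-- real norm-square of a complex vector -/
def nr (x : Fin n → ℂ) : ℝ := ∑ i, Complex.normSq (x i)

lemma nr_nonneg (x : Fin n → ℂ) : 0 ≤ nr x :=
  Finset.sum_nonneg fun i _ => Complex.normSq_nonneg _

lemma dot_self_eq_nr (x : Fin n → ℂ) : star x ⬝ᵥ x = ((nr x : ℝ) : ℂ) := by
  simp [dotProduct, nr, Complex.normSq_eq_conj_mul_self, Pi.star_apply,
    Complex.star_def]

lemma nr_eq_zero_iff (x : Fin n → ℂ) : nr x = 0 ↔ x = 0 := by
  constructor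
  · intro h
    funext i
    have := (Finset.sum_eq_zero_iff_of_nonneg (fun i _ => Complex.normSq_nonneg (x i))).mp h
      i (Finset.mem_univ i)
    simpa using Complex.normSq_eq_zero.mp this
  · intro h; simp [h, nr]

lemma qf_continuous (C : Matrix (Fin n) (Fin n) ℂ) : Continuous (qf C) := by
  unfold qf dotProduct Matrix.mulVec dotProduct
  continuity

lemma nr_continuous : Continuous (nr (n := n)) := by
  unfold nr
  continuity

lemma nr_smul (c : ℂ) (v : Fin n → ℂ) : nr (c • v) = Complex.normSq c * nr v := by
  simp [nr, Complex.normSq_mul, Finset.mul_sum]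

lemma qf_sub (C D : Matrix (Fin n) (Fin n) ℂ) (v : Fin n → ℂ) :
    qf (C - D) v = qf C v - qf D v := by
  simp [qf, Matrix.sub_mulVec, dotProduct_sub]

lemma qf_conj (C : Matrix (Fin n) (Fin n) ℂ) (v : Fin n → ℂ) :
    star (qf C v) = qf Cᴴ v := qcross_conj C v v

lemma seg_core (C : Matrix (Fin n) (Fin n) ℂ) (x y : Fin n → ℂ) (hx : nr x = 1)
    (hy : nr y = 1) (hqx : qf C x = 0) (hqy : qf C y = 1) {s : ℝ}
    (hs : s ∈ Set.Icc (0:ℝ) 1) : ∃ z, nr z = 1 ∧ qf C z = (s : ℂ) := by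
  classical
  set c : ℂ := star x ⬝ᵥ (C - Cᴴ) *ᵥ y with hc
  obtain ⟨μ, hμ1, hμ2⟩ : ∃ μ : ℂ, star μ * μ = 1 ∧ (star μ * c).im = 0 := by
    by_cases h : c = 0
    · exact ⟨1, by simp, by simp [h]⟩
    · set a : ℝ := ‖c‖ with ha
      have ha0 : a ≠ 0 := norm_ne_zero_iff.mpr h
      have hcc : (starRingEnd ℂ) c * c = ((Complex.normSq c : ℝ) : ℂ) := by
        rw [mul_comm]; exact Complex.mul_conj c
      have hnsq : Complex.normSq c = a ^ 2 := (Complex.sq_norm c).symm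
      refine ⟨((a⁻¹ : ℝ) : ℂ) * c, ?_, ?_⟩
      · have h1 : star (((a⁻¹ : ℝ) : ℂ) * c) * (((a⁻¹ : ℝ) : ℂ) * c)
            = ((a⁻¹ * a⁻¹ : ℝ) : ℂ) * ((starRingEnd ℂ) c * c) := by
          simp only [star_mul', Complex.star_def, Complex.conj_ofReal]
          push_cast
          ring
        rw [h1, hcc]
        norm_cast
        rw [hnsq]
        field_simp
      · have h1 : star (((a⁻¹ : ℝ) : ℂ) * c) * c
            = ((a⁻¹ : ℝ) : ℂ) * ((starRingEnd ℂ) c * c) := by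
          simp only [star_mul', Complex.star_def, Complex.conj_ofReal]
          ring
        rw [h1, hcc]
        norm_cast
  have hμ0 : μ ≠ 0 := by
    intro h; rw [h] at hμ1; simp at hμ1
  set z : ℝ → (Fin n → ℂ) := fun t => ((1 - (t:ℂ)) * μ) • x + ((t:ℂ)) • y with hz
  -- z t is never zero
  have hzne : ∀ t : ℝ, z t ≠ 0 := by
    intro t h0
    have h0' : ((1 - (t:ℂ)) * μ) • x + ((t:ℂ)) • y = 0 := h0
    have hyx : ((t:ℂ)) • y = -(((1 - (t:ℂ)) * μ) • x) := eq_neg_of_add_eq_zero_right h0'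
    have hq : qf C (((t:ℂ)) • y) = qf C (-(((1 - (t:ℂ)) * μ) • x)) := by rw [hyx]
    rw [qf_smul, hqy, ← neg_smul, qf_smul, hqx] at hq
    have ht0 : (t:ℂ) = 0 := by
      have htt : (t:ℂ) * (t:ℂ) = 0 := by
        simpa [Complex.star_def, Complex.conj_ofReal] using hq
      rcases mul_eq_zero.mp htt with h | h <;> exact h
    have ht0' : t = 0 := by exact_mod_cast ht0
    subst ht0'
    have hz0 : z 0 = μ • x := by simp [hz]
    rw [h0] at hz0
    rcases smul_eq_zero.mp hz0.symm with h | h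
    · exact hμ0 h
    · rw [h] at hx; simp [nr] at hx
  have hpos : ∀ t : ℝ, 0 < nr (z t) := by
    intro t
    rcases lt_or_eq_of_le (nr_nonneg (z t)) with h | h
    · exact h
    · exact absurd ((nr_eq_zero_iff _).mp h.symm) (hzne t)
  -- imaginary part of qf C (z t) vanishes
  have hskewx : qf (C - Cᴴ) x = 0 := by
    rw [qf_sub, ← qf_conj, hqx]; simp
  have hskewy : qf (C - Cᴴ) y = 0 := by
    rw [qf_sub, ← qf_conj, hqy]; simp
  have hc2 : star y ⬝ᵥ (C - Cᴴ) *ᵥ x = -star c := by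
    have h1 : star c = -(star y ⬝ᵥ (C - Cᴴ) *ᵥ x) := by
      rw [hc, qcross_conj]
      simp [Matrix.conjTranspose_sub, Matrix.sub_mulVec, dotProduct_sub]
    rw [h1, neg_neg]
  have him : ∀ t : ℝ, (qf C (z t)).im = 0 := by
    intro t
    have hexp := qf_expand (C - Cᴴ) ((1 - (t:ℂ)) * μ) ((t:ℂ)) x y
    rw [hskewx, hskewy, ← hc, hc2] at hexp
    have hsz : qf (C - Cᴴ) (z t) = qf C (z t) - star (qf C (z t)) := by
      rw [qf_sub, qf_conj]
    have hstars : star ((1 - (t:ℂ)) * μ) = (1 - (t:ℂ)) * star μ := by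
      simp [star_mul', Complex.star_def, Complex.conj_ofReal]
    have hstart : star ((t:ℂ)) = (t:ℂ) := by
      simp [Complex.star_def, Complex.conj_ofReal]
    rw [hsz, hstars, hstart] at hexp
    have hw : star (star μ * c) = star μ * c := Complex.conj_eq_iff_im.mpr hμ2
    have hw' : μ * star c = star μ * c := by
      rw [← hw, star_mul', star_star]
    have hexp2 : qf C (z t) - star (qf C (z t)) = 0 := by
      rw [hexp]
      linear_combination (-((t:ℂ) * (1 - (t:ℂ)))) * hw'
    have heq : qf C (z t) = star (qf C (z t)) := sub_eq_zero.mp hexp2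
    exact Complex.conj_eq_iff_im.mp heq.symm
  -- the path function
  set φ : ℝ → ℝ := fun t => (qf C (z t)).re / nr (z t) with hφ
  have hzc : Continuous z := by
    apply Continuous.add
    · exact (Continuous.mul (continuous_const.sub Complex.continuous_ofReal) continuous_const).smul continuous_const
    · exact (Complex.continuous_ofReal).smul continuous_const
  have hφc : Continuous φ := by
    apply Continuous.div
    · exact Complex.continuous_re.comp ((qf_continuous C).comp hzc)
    · exact nr_continuous.comp hzc
    · exact fun t => ne_of_gt (hpos t)
  have hz0 : z 0 = μ • x := by simp [hz]
  have hz1 : z 1 = y := by simp [hz]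
  have hφ0 : φ 0 = 0 := by
    rw [hφ]
    simp only [hz0, qf_smul, hqx]
    simp
  have hφ1 : φ 1 = 1 := by
    rw [hφ]
    simp only [hz1, hqy, hy]
    simp
  have hsub := intermediate_value_Icc (zero_le_one) hφc.continuousOn
  rw [hφ0, hφ1] at hsub
  obtain ⟨t, _, hts⟩ := hsub hs
  -- normalize z t
  set ρ : ℝ := nr (z t) with hρ
  have hρ0 : 0 < ρ := hpos t
  have hsρ : Real.sqrt ρ ≠ 0 := by positivity
  refine ⟨(((Real.sqrt ρ)⁻¹ : ℝ) : ℂ) • z t, ?_, ?_⟩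
  · rw [nr_smul]
    have : Complex.normSq (((Real.sqrt ρ)⁻¹ : ℝ) : ℂ) = ρ⁻¹ := by
      rw [Complex.normSq_ofReal, ← mul_inv, Real.mul_self_sqrt hρ0.le]
    rw [this, ← hρ]
    field_simp
  · rw [qf_smul]
    have h1 : star ((((Real.sqrt ρ)⁻¹ : ℝ)) : ℂ) * (((Real.sqrt ρ)⁻¹ : ℝ) : ℂ)
        = ((ρ⁻¹ : ℝ) : ℂ) := by
      rw [Complex.star_def, Complex.conj_ofReal, ← Complex.ofReal_mul, ← mul_inv,
        Real.mul_self_sqrt hρ0.le]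
    have h2 : qf C (z t) = (((qf C (z t)).re : ℝ) : ℂ) := by
      apply Complex.ext
      · simp
      · simp [him t]
    have h3 : (qf C (z t)).re = s * ρ := by
      have := hts
      rw [hφ] at this
      rw [div_eq_iff (ne_of_gt (hpos t))] at this
      rw [hρ]
      linarith [this]
    rw [h1, h2, h3]
    push_cast
    field_simp

lemma qf_real_smul (C : Matrix (Fin n) (Fin n) ℂ) (r : ℝ) (v : Fin n → ℂ) :
    qf C (((r : ℝ) : ℂ) • v) = ((r * r : ℝ) : ℂ) * qf C v := by
  rw [qf_smul, Complex.star_def, Complex.conj_ofReal]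
  push_cast
  ring

lemma exists_unit (C : Matrix (Fin n) (Fin n) ℂ) (v : Fin n → ℂ) (h : nr v ≠ 0) :
    ∃ u, nr u = 1 ∧ qf C v = ((nr v : ℝ) : ℂ) * qf C u := by
  have hpos : 0 < nr v := lt_of_le_of_ne (nr_nonneg v) (Ne.symm h)
  refine ⟨(((Real.sqrt (nr v))⁻¹ : ℝ) : ℂ) • v, ?_, ?_⟩
  · rw [nr_smul, Complex.normSq_ofReal, ← mul_inv, Real.mul_self_sqrt hpos.le]
    field_simp
  · rw [qf_real_smul, ← mul_inv, Real.mul_self_sqrt hpos.le]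
    push_cast
    field_simp

lemma sph (C : Matrix (Fin n) (Fin n) ℂ) (x y : Fin n → ℂ) (hx : nr x = 1)
    (hy : nr y = 1) {l : ℝ} (hl : l ∈ Set.Icc (0:ℝ) 1) :
    ∃ z, nr z = 1 ∧ qf C z = ((1 - l : ℝ) : ℂ) * qf C x + ((l : ℝ) : ℂ) * qf C y := by
  by_cases hpq : qf C x = qf C y
  · refine ⟨x, hx, ?_⟩
    rw [hpq]
    push_cast
    ring
  · set p := qf C x with hp
    set d : ℂ := qf C y - qf C x with hd
    have hd0 : d ≠ 0 := sub_ne_zero.mpr (Ne.symm hpq)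
    set C' : Matrix (Fin n) (Fin n) ℂ := d⁻¹ • (C - p • 1) with hC'
    have key : ∀ v, qf C' v = d⁻¹ * (qf C v - p * (star v ⬝ᵥ v)) := by
      intro v
      rw [hC']
      simp only [qf, Matrix.smul_mulVec, dotProduct_smul, smul_eq_mul,
        Matrix.sub_mulVec, dotProduct_sub, Matrix.one_mulVec]
    have hqx' : qf C' x = 0 := by
      rw [key, dot_self_eq_nr, hx]
      simp [hp]
    have hqy' : qf C' y = 1 := by
      rw [key, dot_self_eq_nr, hy]
      field_simp
      simp [hd, hp]
    obtain ⟨z, hz1, hz2⟩ := seg_core C' x y hx hy hqx' hqy' hl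
    refine ⟨z, hz1, ?_⟩
    have hkz := key z
    rw [hz2, dot_self_eq_nr, hz1] at hkz
    have hkz' : (l : ℂ) * d = qf C z - p := by
      rw [hkz]
      field_simp
      simp
    push_cast
    linear_combination -hkz' + (l : ℂ) * hd

lemma qf_add_mem (C : Matrix (Fin n) (Fin n) ℂ) (x y : Fin n → ℂ) {a b : ℝ}
    (ha : 0 ≤ a) (hb : 0 ≤ b) (hab : a + b = 1) :
    ∃ v, ((a : ℝ) : ℂ) * qf C x + ((b : ℝ) : ℂ) * qf C y = qf C v := by
  by_cases hx0 : nr x = 0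
  · have : x = 0 := (nr_eq_zero_iff x).mp hx0
    subst this
    refine ⟨(((Real.sqrt b : ℝ)) : ℂ) • y, ?_⟩
    rw [qf_real_smul, Real.mul_self_sqrt hb]
    simp [qf]
  · by_cases hy0 : nr y = 0
    · have : y = 0 := (nr_eq_zero_iff y).mp hy0
      subst this
      refine ⟨(((Real.sqrt a : ℝ)) : ℂ) • x, ?_⟩
      rw [qf_real_smul, Real.mul_self_sqrt ha]
      simp [qf]
    · obtain ⟨u, hu1, hu2⟩ := exists_unit C x hx0
      obtain ⟨w, hw1, hw2⟩ := exists_unit C y hy0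
      set Nx := nr x
      set Ny := nr y
      have hNx : 0 < Nx := lt_of_le_of_ne (nr_nonneg x) (Ne.symm hx0)
      have hNy : 0 < Ny := lt_of_le_of_ne (nr_nonneg y) (Ne.symm hy0)
      set cc : ℝ := a * Nx + b * Ny with hcc
      by_cases hc0 : cc = 0
      · have h1 : a * Nx = 0 ∧ b * Ny = 0 := by
          constructor <;> nlinarith [mul_nonneg ha hNx.le, mul_nonneg hb hNy.le]
        refine ⟨0, ?_⟩
        rw [hu2, hw2]
        have ha' : (a : ℂ) * ((Nx : ℝ) : ℂ) = 0 := by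
          rw [← Complex.ofReal_mul]; exact_mod_cast congrArg Complex.ofReal h1.1
        have hb' : (b : ℂ) * ((Ny : ℝ) : ℂ) = 0 := by
          rw [← Complex.ofReal_mul]; exact_mod_cast congrArg Complex.ofReal h1.2
        have : qf C (0 : Fin n → ℂ) = 0 := by simp [qf]
        rw [this]
        linear_combination qf C u * ha' + qf C w * hb'
      · have hcpos : 0 < cc := by
          rcases lt_or_eq_of_le (by positivity : (0:ℝ) ≤ cc) with h | h
          · exact h
          · exact absurd h.symm hc0
        set l : ℝ := b * Ny / cc with hlv
        have hl : l ∈ Set.Icc (0:ℝ) 1 := by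
          constructor
          · positivity
          · rw [hlv, div_le_one hcpos, hcc]
            nlinarith [mul_nonneg ha hNx.le]
        obtain ⟨z, hz1, hz2⟩ := sph C u w hu1 hw1 hl
        refine ⟨(((Real.sqrt cc : ℝ)) : ℂ) • z, ?_⟩
        rw [qf_real_smul, Real.mul_self_sqrt hcpos.le, hz2, hu2, hw2]
        have h2 : (l : ℝ) * cc = b * Ny := by
          rw [hlv]; field_simp
        have h1 : (1 - l : ℝ) * cc = a * Nx := by
          linear_combination hcc - h2
        have h1' : ((1 - l : ℝ) : ℂ) * (cc : ℂ) = (a : ℂ) * ((Nx : ℝ) : ℂ) := by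
          exact_mod_cast congrArg Complex.ofReal h1
        have h2' : ((l : ℝ) : ℂ) * (cc : ℂ) = (b : ℂ) * ((Ny : ℝ) : ℂ) := by
          exact_mod_cast congrArg Complex.ofReal h2
        linear_combination -(qf C u * h1') - qf C w * h2'

lemma qf_range_convex (C : Matrix (Fin n) (Fin n) ℂ) :
    Convex ℝ {w : ℂ | ∃ v : Fin n → ℂ, w = qf C v} := by
  rintro p ⟨xx, rfl⟩ q ⟨yy, rfl⟩ a b ha hb hab
  obtain ⟨v, hv⟩ := qf_add_mem C xx yy ha hb hab
  refine ⟨v, ?_⟩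
  rw [← hv]
  simp [Complex.real_smul]

lemma qf_matsmul (c : ℂ) (M : Matrix (Fin n) (Fin n) ℂ) (v : Fin n → ℂ) :
    qf (c • M) v = c * qf M v := by
  simp [qf, Matrix.smul_mulVec, dotProduct_smul, smul_eq_mul]

lemma qf_matadd (M N : Matrix (Fin n) (Fin n) ℂ) (v : Fin n → ℂ) :
    qf (M + N) v = qf M v + qf N v := by
  simp [qf, Matrix.add_mulVec, dotProduct_add]

lemma qf_matneg (M : Matrix (Fin n) (Fin n) ℂ) (v : Fin n → ℂ) :
    qf (-M) v = - qf M v := by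
  simp [qf, Matrix.neg_mulVec, dotProduct_neg]

lemma qf_skew (B : Matrix (Fin n) (Fin n) ℂ) (v : Fin n → ℂ) :
    qf (((2 * Complex.I))⁻¹ • (B - Bᴴ)) v = (((qf B v).im : ℝ) : ℂ) := by
  rw [qf_matsmul, qf_sub, ← qf_conj, Complex.star_def, Complex.sub_conj]
  have h2I : (2 * Complex.I) ≠ 0 := by simp [Complex.I_ne_zero]
  field_simp
  push_cast
  ring

lemma qf_herm (B : Matrix (Fin n) (Fin n) ℂ) (v : Fin n → ℂ) :
    qf (((2 : ℂ))⁻¹ • (B + Bᴴ)) v = (((qf B v).re : ℝ) : ℂ) := by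
  rw [qf_matsmul, qf_matadd, ← qf_conj, Complex.star_def, Complex.add_conj]
  push_cast
  ring

lemma qf_gram (B : Matrix (Fin n) (Fin n) ℂ) (v : Fin n → ℂ) :
    qf (Bᴴ * B) v = ((nr (B *ᵥ v) : ℝ) : ℂ) := by
  unfold qf
  rw [← Matrix.mulVec_mulVec, Matrix.dotProduct_mulVec, ← Matrix.star_mulVec,
    dot_self_eq_nr]

lemma qf_one (v : Fin n → ℂ) : qf (1 : Matrix (Fin n) (Fin n) ℂ) v = ((nr v : ℝ) : ℂ) := by
  unfold qf
  rw [Matrix.one_mulVec, dot_self_eq_nr]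

lemma qf_bigM (B : Matrix (Fin n) (Fin n) ℂ) (r h τ : ℝ) (v : Fin n → ℂ) :
    qf (-(((2 * Complex.I))⁻¹ • (B - Bᴴ) - (h : ℂ) • (((2 : ℂ))⁻¹ • (B + Bᴴ))
        + (τ : ℂ) • (Bᴴ * B - ((r : ℂ) ^ 2) • 1))) v
      = ((-(((qf B v).im - h * (qf B v).re) + τ * (nr (B *ᵥ v) - r ^ 2 * nr v)) : ℝ) : ℂ) := by
  rw [qf_matneg, show ∀ X Y Z : Matrix (Fin n) (Fin n) ℂ, X - Y + Z = X + (-Y) + Z from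
    fun X Y Z => by abel]
  rw [qf_matadd, qf_matadd, qf_matneg, qf_skew, qf_matsmul ((h:ℂ)), qf_herm,
    qf_matsmul ((τ:ℂ))]
  rw [show (Bᴴ * B - ((r:ℂ)^2) • 1 : Matrix (Fin n) (Fin n) ℂ)
      = Bᴴ * B + (-(((r:ℂ)^2) • 1)) from by abel]
  rw [qf_matadd, qf_matneg, qf_matsmul, qf_gram, qf_one]
  push_cast
  ring

lemma isHermitian_real_smul (c : ℝ) (M : Matrix (Fin n) (Fin n) ℂ) (hM : M.IsHermitian) :
    (((c : ℝ) : ℂ) • M).IsHermitian := by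
  unfold Matrix.IsHermitian at *
  rw [Matrix.conjTranspose_smul, hM, Complex.star_def, Complex.conj_ofReal]

lemma bigM_herm (B : Matrix (Fin n) (Fin n) ℂ) (r h τ : ℝ) :
    (-(((2 * Complex.I))⁻¹ • (B - Bᴴ) - (h : ℂ) • (((2 : ℂ))⁻¹ • (B + Bᴴ))
        + (τ : ℂ) • (Bᴴ * B - ((r : ℂ) ^ 2) • 1))).IsHermitian := by
  have hAs : ((((2 * Complex.I))⁻¹ • (B - Bᴴ)) : Matrix (Fin n) (Fin n) ℂ).IsHermitian := by
    unfold Matrix.IsHermitian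
    rw [Matrix.conjTranspose_smul, Matrix.conjTranspose_sub, Matrix.conjTranspose_conjTranspose]
    have hst : star ((2 * Complex.I))⁻¹ = -((2 * Complex.I))⁻¹ := by
      rw [star_inv₀, show star (2 * Complex.I) = -(2 * Complex.I) from by
        simp [Complex.star_def, Complex.conj_I], inv_neg]
    rw [hst, neg_smul, ← smul_neg, neg_sub]
  have hAh : ((((2 : ℂ))⁻¹ • (B + Bᴴ)) : Matrix (Fin n) (Fin n) ℂ).IsHermitian := by
    unfold Matrix.IsHermitian
    rw [Matrix.conjTranspose_smul, Matrix.conjTranspose_add, Matrix.conjTranspose_conjTranspose]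
    have hst : star ((2 : ℂ))⁻¹ = ((2 : ℂ))⁻¹ := by
      simp
    rw [hst, add_comm Bᴴ B]
  have hG : ((Bᴴ * B - ((r : ℂ) ^ 2) • 1) : Matrix (Fin n) (Fin n) ℂ).IsHermitian := by
    apply Matrix.IsHermitian.sub (Matrix.isHermitian_conjTranspose_mul_self B)
    have : ((r : ℂ) ^ 2) = (((r ^ 2 : ℝ) : ℝ) : ℂ) := by push_cast; ring
    rw [this]
    exact isHermitian_real_smul _ _ Matrix.isHermitian_one
  exact (((hAs.sub (isHermitian_real_smul h _ hAh)).add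
    (isHermitian_real_smul τ _ hG))).neg

lemma enorm_sq (x : EuclideanSpace ℂ (Fin n)) :
    ‖x‖ ^ 2 = nr ((WithLp.equiv 2 (Fin n → ℂ)) x) := by
  rw [EuclideanSpace.norm_eq, Real.sq_sqrt (by positivity)]
  unfold nr
  apply Finset.sum_congr rfl
  intro i _
  rw [Complex.sq_norm]; rfl

lemma einner_eq (B : Matrix (Fin n) (Fin n) ℂ) (x : EuclideanSpace ℂ (Fin n)) :
    (inner ℂ x (Matrix.toEuclideanLin B x) : ℂ) = qf B ((WithLp.equiv 2 (Fin n → ℂ)) x) := by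
  rw [EuclideanSpace.inner_eq_star_dotProduct, dotProduct_comm]
  rfl

lemma enorm_lin (B : Matrix (Fin n) (Fin n) ℂ) (x : EuclideanSpace ℂ (Fin n)) :
    ‖Matrix.toEuclideanLin B x‖ ^ 2 = nr (B *ᵥ ((WithLp.equiv 2 (Fin n → ℂ)) x)) := by
  rw [enorm_sq]; rfl

lemma lim_nonpos {c d : ℝ} (h : ∀ ε : ℝ, 0 < ε → c + ε * d < 0) : c ≤ 0 := by
  by_contra hc
  push_neg at hc
  rcases le_or_gt 0 d with hd | hd
  · have := h 1 one_pos
    nlinarith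
  · have hε : 0 < c / (-2 * d) := div_pos hc (by linarith)
    have h2 := h _ hε
    have hd' : d ≠ 0 := ne_of_lt hd
    have h3 : (c / (-2 * d)) * d = -(c / 2) := by
      field_simp
    linarith

/-- The vertically projected Davis–Wielandt shell `W_{≥r}(A)`. -/
def wShell {n : ℕ} (A : Matrix (Fin n) (Fin n) ℂ) (r : ℝ) : Set ℂ :=
  { z | ∃ x : EuclideanSpace ℂ (Fin n), ‖x‖ = 1 ∧ r ≤ ‖Matrix.toEuclideanLin A x‖ ∧
      z = (inner ℂ x (Matrix.toEuclideanLin A x) : ℂ) }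

set_option maxHeartbeats 1000000

/-- Upper-phase half of the paper's Proposition 3: `tan ψ̄_r(A)` equals the optimal value
of the SDP minimizing `h` subject to `A_s − h·A_h + τ·(A*A − r²·I) ⪯ 0`, `τ ≥ 0`. -/
theorem upper_constrained_phase_sdp {n : ℕ} (hn : 1 ≤ n)
    (A : Matrix (Fin n) (Fin n) ℂ) (r : ℝ) (hr : 0 ≤ r)
    (x₀ : EuclideanSpace ℂ (Fin n)) (hx₀ : ‖x₀‖ = 1)
    (hfeas : r < ‖Matrix.toEuclideanLin A x₀‖)
    (hre : ∀ z ∈ wShell A r, 0 < z.re) :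
    let Ah : Matrix (Fin n) (Fin n) ℂ := ((2 : ℂ))⁻¹ • (A + Aᴴ)
    let As : Matrix (Fin n) (Fin n) ℂ := ((2 * Complex.I))⁻¹ • (A - Aᴴ)
    let S : Set ℝ := { h | ∃ τ : ℝ, 0 ≤ τ ∧
      (-(As - (h : ℂ) • Ah + (τ : ℂ) • (Aᴴ * A - ((r : ℂ) ^ 2) • 1))).PosSemidef }
    let T : Set ℝ := { t | ∃ z ∈ wShell A r, t = z.im / z.re }
    S.Nonempty ∧ sSup T ∈ S ∧ sInf S = sSup T := by
  intro Ah As S T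
  -- step 1 : T nonempty
  have hz₀mem : (inner ℂ x₀ (Matrix.toEuclideanLin A x₀) : ℂ) ∈ wShell A r :=
    ⟨x₀, hx₀, hfeas.le, rfl⟩
  have hTne : T.Nonempty := ⟨_, _, hz₀mem, rfl⟩
  -- step 2 : T bounded above (compactness)
  have hlin : Continuous (Matrix.toEuclideanLin A) :=
    LinearMap.continuous_of_finiteDimensional _
  have hTbdd : BddAbove T := by
    set K : Set (EuclideanSpace ℂ (Fin n)) :=
      {x | ‖x‖ = 1 ∧ r ≤ ‖Matrix.toEuclideanLin A x‖} with hK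
    have hKcl : IsClosed K := by
      apply IsClosed.inter
      · exact isClosed_eq continuous_norm continuous_const
      · exact isClosed_le continuous_const (continuous_norm.comp hlin)
    have hKc : IsCompact K := by
      apply IsCompact.of_isClosed_subset (isCompact_sphere (0 : EuclideanSpace ℂ (Fin n)) 1)
        hKcl
      intro x hx
      simpa [mem_sphere_iff_norm] using hx.1
    have hshell : wShell A r
        = (fun x : EuclideanSpace ℂ (Fin n) => (inner ℂ x (Matrix.toEuclideanLin A x) : ℂ)) '' K := by
      ext z
      constructor
      · rintro ⟨x, h1, h2, h3⟩; exact ⟨x, ⟨h1, h2⟩, h3.symm⟩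
      · rintro ⟨x, ⟨h1, h2⟩, h3⟩; exact ⟨x, h1, h2, h3.symm⟩
    have hshc : IsCompact (wShell A r) := by
      rw [hshell]
      exact hKc.image (Continuous.inner continuous_id hlin)
    have hTim : T = (fun z : ℂ => z.im / z.re) '' wShell A r := by
      ext t
      constructor
      · rintro ⟨z, h1, h2⟩; exact ⟨z, h1, h2.symm⟩
      · rintro ⟨z, h1, h2⟩; exact ⟨z, h1, h2.symm⟩
    have hTc : IsCompact T := by
      rw [hTim]
      exact hshc.image_of_continuousOn
        (ContinuousOn.div Complex.continuous_im.continuousOn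
          Complex.continuous_re.continuousOn (fun z hz => ne_of_gt (hre z hz)))
    exact hTc.bddAbove
  set h₀ : ℝ := sSup T with hh₀
  -- upper bound property of h₀ on the shell
  have hub : ∀ z ∈ wShell A r, z.im ≤ h₀ * z.re := by
    intro z hz
    have h1 : z.im / z.re ≤ h₀ := le_csSup hTbdd ⟨z, hz, rfl⟩
    have h2 := hre z hz
    rw [div_le_iff₀ h2] at h1
    linarith [h1]
  -- quadratic forms
  set fq : (Fin n → ℂ) → ℝ := fun v => (qf A v).im - h₀ * (qf A v).re with hfq
  set gq : (Fin n → ℂ) → ℝ := fun v => nr (A *ᵥ v) - r ^ 2 * nr v with hgq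
  -- key implication via the shell
  have hkey : ∀ v : Fin n → ℂ, 0 < gq v → fq v ≤ 0 := by
    intro v hgv
    have hv0 : v ≠ 0 := by
      intro h
      rw [h] at hgv
      simp [hgq, nr, Matrix.mulVec_zero] at hgv
    have hNpos : 0 < nr v :=
      lt_of_le_of_ne (nr_nonneg v) (Ne.symm (fun h => hv0 ((nr_eq_zero_iff v).mp h)))
    set s : ℝ := (Real.sqrt (nr v))⁻¹ with hs
    have hsnn : 0 ≤ s := by positivity
    have hss : s * s = (nr v)⁻¹ := by
      rw [hs, ← mul_inv, Real.mul_self_sqrt hNpos.le]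
    set x : EuclideanSpace ℂ (Fin n) := (WithLp.equiv 2 (Fin n → ℂ)).symm (((s:ℝ):ℂ) • v)
      with hx
    have hxv : (WithLp.equiv 2 (Fin n → ℂ)) x = ((s:ℝ):ℂ) • v := by
      rw [hx, Equiv.apply_symm_apply]
    have hnx : ‖x‖ = 1 := by
      have h1 : ‖x‖ ^ 2 = 1 := by
        rw [enorm_sq, hxv, nr_smul, Complex.normSq_ofReal, hss]
        field_simp
      have h2 := congrArg Real.sqrt h1
      rwa [Real.sqrt_sq (norm_nonneg _), Real.sqrt_one] at h2
    have hlinx : ‖Matrix.toEuclideanLin A x‖ ^ 2 = (nr v)⁻¹ * nr (A *ᵥ v) := by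
      rw [enorm_lin, hxv, Matrix.mulVec_smul, nr_smul, Complex.normSq_ofReal, hss]
    have hrx : r ≤ ‖Matrix.toEuclideanLin A x‖ := by
      have h1 : r ^ 2 < ‖Matrix.toEuclideanLin A x‖ ^ 2 := by
        rw [hlinx, inv_mul_eq_div, lt_div_iff₀ hNpos]
        simp only [hgq] at hgv
        linarith [hgv]
      exact le_of_lt (lt_of_pow_lt_pow_left₀ 2 (norm_nonneg _) h1)
    have hzmem : (inner ℂ x (Matrix.toEuclideanLin A x) : ℂ) ∈ wShell A r := ⟨x, hnx, hrx, rfl⟩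
    have hzq : (inner ℂ x (Matrix.toEuclideanLin A x) : ℂ) = (((nr v)⁻¹ : ℝ) : ℂ) * qf A v := by
      rw [einner_eq, hxv, qf_real_smul, hss]
    have hub' := hub _ hzmem
    rw [hzq] at hub'
    have him : ((((nr v)⁻¹ : ℝ) : ℂ) * qf A v).im = (nr v)⁻¹ * (qf A v).im := by
      simp [Complex.mul_im]
    have hre' : ((((nr v)⁻¹ : ℝ) : ℂ) * qf A v).re = (nr v)⁻¹ * (qf A v).re := by
      simp [Complex.mul_re]
    rw [him, hre'] at hub'
    rw [hfq]
    simp only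
    have hNinv : 0 < (nr v)⁻¹ := by positivity
    nlinarith [hub']
  -- the convex set and separation
  set Gm : Matrix (Fin n) (Fin n) ℂ := Aᴴ * A - ((r : ℂ) ^ 2) • 1 with hGm
  set Cm : Matrix (Fin n) (Fin n) ℂ := (As - (h₀ : ℂ) • Ah) + Complex.I • Gm with hCm
  have hqfC : ∀ v, qf Cm v = ((fq v : ℝ) : ℂ) + Complex.I * ((gq v : ℝ) : ℂ) := by
    intro v
    have e1 : qf As v = (((qf A v).im : ℝ) : ℂ) := qf_skew A v
    have e2 : qf Ah v = (((qf A v).re : ℝ) : ℂ) := qf_herm A v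
    have h1 : qf (As - (h₀:ℂ) • Ah) v = ((fq v : ℝ) : ℂ) := by
      rw [show (As - (h₀:ℂ) • Ah) = As + -((h₀:ℂ) • Ah) from by abel, qf_matadd, qf_matneg,
        e1, qf_matsmul, e2]
      simp only [hfq]
      push_cast
      ring
    have h2 : qf Gm v = ((gq v : ℝ) : ℂ) := by
      rw [show Gm = Aᴴ * A + -(((r:ℂ)^2) • 1) from by rw [hGm]; abel,
        qf_matadd, qf_matneg, qf_matsmul, qf_gram, qf_one]
      simp only [hgq]
      push_cast
      ring
    calc qf Cm v = qf (As - (h₀:ℂ) • Ah) v + qf (Complex.I • Gm) v := by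
          rw [hCm, qf_matadd]
      _ = ((fq v : ℝ) : ℂ) + Complex.I * ((gq v : ℝ) : ℂ) := by
          rw [qf_matsmul, h1, h2]
  have hqre : ∀ v, (qf Cm v).re = fq v := by
    intro v; rw [hqfC v]; simp
  have hqim : ∀ v, (qf Cm v).im = gq v := by
    intro v; rw [hqfC v]; simp
  set Qo : Set ℂ := {z | 0 < z.re ∧ 0 < z.im} with hQo
  set V : Set ℂ := {w | ∃ v : Fin n → ℂ, w = qf Cm v} with hV
  have hQoconv : Convex ℝ Qo := by
    rintro z ⟨hz1, hz2⟩ w ⟨hw1, hw2⟩ a b ha hb hab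
    have hcomb : ∀ p q : ℝ, 0 < p → 0 < q → 0 < a * p + b * q := by
      intro p q hp hq
      rcases eq_or_lt_of_le ha with h | h
      · rw [← h] at hab ⊢
        simp at hab ⊢
        rw [hab]
        simpa using hq
      · have : 0 ≤ b * q := mul_nonneg hb hq.le
        nlinarith
    constructor
    · simpa [Complex.add_re, Complex.real_smul, Complex.mul_re] using hcomb _ _ hz1 hw1
    · simpa [Complex.add_im, Complex.real_smul, Complex.mul_im] using hcomb _ _ hz2 hw2
  have hQoopen : IsOpen Qo :=
    (isOpen_lt continuous_const Complex.continuous_re).inter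
      (isOpen_lt continuous_const Complex.continuous_im)
  have hVconv : Convex ℝ V := qf_range_convex Cm
  have hdisj : Disjoint Qo V := by
    rw [Set.disjoint_left]
    rintro z ⟨hz1, hz2⟩ ⟨v, rfl⟩
    rw [hqre v] at hz1
    rw [hqim v] at hz2
    linarith [hkey v hz2]
  obtain ⟨φ, u, hφQ, hφV⟩ := geometric_hahn_banach_open hQoconv hQoopen hVconv hdisj
  have h0V : (0 : ℂ) ∈ V := ⟨0, by simp [qf, Matrix.mulVec_zero]⟩
  have hu0 : u ≤ 0 := by
    have := hφV 0 h0V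
    simpa using this
  have hφ1 : φ 1 ≤ 0 := by
    apply lim_nonpos (d := φ Complex.I)
    intro ε hε
    have hmem : ((1 : ℂ) + ε • Complex.I) ∈ Qo := by
      constructor <;> simp [Complex.real_smul, hε]
    have := hφQ _ hmem
    rw [map_add, map_smul, smul_eq_mul] at this
    have hφone : φ (1 : ℂ) + ε * φ Complex.I < u := this
    linarith
  have hφI : φ Complex.I ≤ 0 := by
    apply lim_nonpos (d := φ 1)
    intro ε hε
    have hmem : (Complex.I + ε • (1 : ℂ)) ∈ Qo := by
      constructor <;> simp [Complex.real_smul, hε]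
    have := hφQ _ hmem
    rw [map_add, map_smul, smul_eq_mul] at this
    linarith
  have hφdec : ∀ z : ℂ, φ z = z.re * φ 1 + z.im * φ Complex.I := by
    intro z
    have hzd : z = z.re • (1 : ℂ) + z.im • Complex.I := by
      apply Complex.ext <;> simp [Complex.real_smul]
    calc φ z = φ (z.re • (1 : ℂ) + z.im • Complex.I) := by rw [← hzd]
      _ = z.re * φ 1 + z.im * φ Complex.I := by
          rw [map_add, map_smul, map_smul, smul_eq_mul, smul_eq_mul]
  have hφpos : ∀ v : Fin n → ℂ, 0 ≤ φ (qf Cm v) := by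
    intro v
    by_contra hneg
    push_neg at hneg
    set t : ℝ := (u - 1) / φ (qf Cm v) with ht
    have htpos : 0 < t := div_pos_of_neg_of_neg (by linarith) hneg
    have hscale : ((t : ℝ) : ℂ) * qf Cm v ∈ V := by
      refine ⟨(((Real.sqrt t : ℝ)) : ℂ) • v, ?_⟩
      rw [qf_real_smul, Real.mul_self_sqrt htpos.le]
    have h1 := hφV _ hscale
    rw [← Complex.real_smul, map_smul, smul_eq_mul] at h1
    have h2 : t * φ (qf Cm v) = u - 1 := by
      rw [ht, div_mul_cancel₀ _ (ne_of_lt hneg)]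
    rw [h2] at h1
    linarith
  set α : ℝ := -φ 1 with hα
  set β : ℝ := -φ Complex.I with hβ
  have hαnn : 0 ≤ α := by simp [hα]; linarith
  have hβnn : 0 ≤ β := by simp [hβ]; linarith
  have hquad : ∀ v, α * fq v + β * gq v ≤ 0 := by
    intro v
    have := hφpos v
    rw [hφdec, hqre, hqim] at this
    rw [hα, hβ]
    nlinarith [this]
  have hαpos : 0 < α := by
    rcases eq_or_lt_of_le hαnn with h | h
    · exfalso
      have hβpos : 0 < β := by
        rcases eq_or_lt_of_le hβnn with h' | h'
        · exfalso
          have hφz : φ ((1 : ℂ) + Complex.I) = 0 := by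
            rw [hφdec]
            simp
            rw [show φ 1 = -α from by rw [hα]; ring, show φ Complex.I = -β from by
              rw [hβ]; ring, ← h, ← h']
            ring
          have hmem : ((1 : ℂ) + Complex.I) ∈ Qo := by constructor <;> simp
          have := hφQ _ hmem
          rw [hφz] at this
          linarith
        · exact h'
      -- then gq v ≤ 0 for all v, contradicting strict feasibility
      have hgle : ∀ v, gq v ≤ 0 := by
        intro v
        have := hquad v
        rw [← h] at this
        nlinarith
      have hfeasv : 0 < gq ((WithLp.equiv 2 (Fin n → ℂ)) x₀) := by
        rw [hgq]
        simp only
        rw [← enorm_sq, ← enorm_lin, hx₀]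
        have : r ^ 2 < ‖Matrix.toEuclideanLin A x₀‖ ^ 2 := by
          apply pow_lt_pow_left₀ hfeas hr
          norm_num
        nlinarith
      linarith [hgle ((WithLp.equiv 2 (Fin n → ℂ)) x₀), hfeasv]
    · exact h
  set τ : ℝ := β / α with hτdef
  have hτnn : 0 ≤ τ := div_nonneg hβnn hαpos.le
  have hβτ : α * τ = β := by
    rw [hτdef]
    field_simp
  have hfg : ∀ v, fq v + τ * gq v ≤ 0 := by
    intro v
    by_contra hcon
    push_neg at hcon
    have h2 : 0 < α * (fq v + τ * gq v) := mul_pos hαpos hcon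
    have expand : α * (fq v + τ * gq v) = α * fq v + β * gq v := by
      rw [mul_add, ← mul_assoc, hβτ]
    linarith [hquad v, h2, expand ▸ h2]
  -- membership of h₀ in S
  have hmem : h₀ ∈ S := by
    refine ⟨τ, hτnn, Matrix.PosSemidef.of_dotProduct_mulVec_nonneg ?_ ?_⟩
    · exact bigM_herm A r h₀ τ
    · intro v
      have hrw : star v ⬝ᵥ
          (-(As - (h₀ : ℂ) • Ah + (τ : ℂ) • (Aᴴ * A - ((r : ℂ) ^ 2) • 1))) *ᵥ v
          = ((-(((qf A v).im - h₀ * (qf A v).re) + τ * (nr (A *ᵥ v) - r ^ 2 * nr v)) : ℝ) : ℂ) :=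
        qf_bigM A r h₀ τ v
      rw [hrw]
      rw [Complex.zero_le_real]
      have := hfg v
      rw [hfq, hgq] at this
      simp only at this
      linarith
  -- every element of S dominates every element of T
  have hSub : ∀ h ∈ S, ∀ t ∈ T, t ≤ h := by
    rintro h ⟨τ', hτ', hpsd⟩ t ⟨z, ⟨x, hx1, hxr, hzeq⟩, rfl⟩
    set v := (WithLp.equiv 2 (Fin n → ℂ)) x with hv
    have hq := hpsd.dotProduct_mulVec_nonneg v
    have hrw : star v ⬝ᵥ
        (-(As - (h : ℂ) • Ah + (τ' : ℂ) • (Aᴴ * A - ((r : ℂ) ^ 2) • 1))) *ᵥ v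
        = ((-(((qf A v).im - h * (qf A v).re) + τ' * (nr (A *ᵥ v) - r ^ 2 * nr v)) : ℝ) : ℂ) :=
      qf_bigM A r h τ' v
    rw [hrw, Complex.zero_le_real] at hq
    have hzv : z = qf A v := by rw [hzeq, einner_eq]
    have hnrv : nr v = 1 := by
      rw [← enorm_sq, hx1]; norm_num
    have hnrAv : r ^ 2 ≤ nr (A *ᵥ v) := by
      have h1 : r ^ 2 ≤ ‖Matrix.toEuclideanLin A x‖ ^ 2 := pow_le_pow_left₀ hr hxr 2
      rwa [enorm_lin, ← hv] at h1
    have hg0 : 0 ≤ nr (A *ᵥ v) - r ^ 2 * nr v := by rw [hnrv]; linarith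
    have hineq : z.im - h * z.re ≤ 0 := by
      rw [hzv]
      nlinarith [mul_nonneg hτ' hg0]
    have hrez := hre z ⟨x, hx1, hxr, hzeq⟩
    rw [div_le_iff₀ hrez]
    linarith
  -- conclusion
  have hTne' := hTne
  obtain ⟨t₁, ht₁⟩ := hTne'
  have hSlb : BddBelow S := ⟨t₁, fun h hh => hSub h hh t₁ ht₁⟩
  refine ⟨⟨h₀, hmem⟩, hmem, le_antisymm ?_ ?_⟩
  · exact csInf_le hSlb hmem
  · apply le_csInf ⟨h₀, hmem⟩
    intro h hh
    exact csSup_le hTne fun t ht => hSub h hh t ht
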